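/- For pointed spaces B ⊆ A ⊆ X there is a long exact sequence of the triple in the category of quasitopological groups: ⋯ → π_{n+1}^{qtop}(X,A) → π_n^{qtop}(A,B) → π_n^{qtop}(X,B) → π_n^{qtop}(X,A) → π_{n−1}^{qtop}(A,B) → ⋯, with all maps continuous homomorphisms. -/

import Mathlib

open Topology.Homotopy unitInterval

noncomputable section

/-- The space of relative `n+1`-loops for the pair `(X, A)` based at `x ∈ A`:
continuous maps `(I^{n+1}, ∂I^{n+1}, J^n) → (X, A, x)`, i.e. maps sending the face
`t_{last} = 0` into `A` and the rest of the boundary to `x`.  It carries the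
compact-open topology. -/
def RelGenLoop (n : ℕ) (X : Type) [TopologicalSpace X] (A : Set X) (x : X) :
    Set C((Fin (n + 1) → I), X) :=
  {f | (∀ t, t (Fin.last n) = 0 → f t ∈ A) ∧
    (∀ t, t (Fin.last n) = 1 → f t = x) ∧
    ∀ t, (∃ i : Fin n, t i.castSucc = 0 ∨ t i.castSucc = 1) → f t = x}

/-- Homotopy of relative loops through relative loops. -/
def RelHomotopic {n : ℕ} {X : Type} [TopologicalSpace X] {A : Set X} {x : X}
    (f g : RelGenLoop n X A x) : Prop :=
  ∃ Hmt : C(((Fin (n + 1) → I) × I), X),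
    (∀ t, Hmt (t, 0) = f.1 t) ∧ (∀ t, Hmt (t, 1) = g.1 t) ∧
    (∀ t s, t (Fin.last n) = 0 → Hmt (t, s) ∈ A) ∧
    (∀ t s, t (Fin.last n) = 1 → Hmt (t, s) = x) ∧
    ∀ t s, (∃ i : Fin n, t i.castSucc = 0 ∨ t i.castSucc = 1) → Hmt (t, s) = x

/-- The relative homotopy group (as a set) `π_{n+1}(X, A, x)`: relative loops modulo
relative homotopy.  With the quotient topology it is `π_{n+1}^{qtop}(X, A)`. -/
def RelHomotopyGroup (n : ℕ) (X : Type) [TopologicalSpace X] (A : Set X) (x : X) :=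
  Quot (@RelHomotopic n X _ A x)

instance relQTop (n : ℕ) (X : Type) [TopologicalSpace X] (A : Set X) (x : X) :
    TopologicalSpace (RelHomotopyGroup n X A x) :=
  inferInstanceAs (TopologicalSpace (Quot _))


namespace LESaux

/-- clamp a real number into `I` -/
def e : ℝ → I := Set.projIcc 0 1 zero_le_one

lemma e_cont : Continuous e := continuous_projIcc
@[simp] lemma e_coe (t : I) : e (t : ℝ) = t := Set.projIcc_val zero_le_one t
lemma e_nonpos {r : ℝ} (h : r ≤ 0) : e r = 0 := by
  rw [e, Set.projIcc_of_le_left _ h]; rfl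
lemma e_ge_one {r : ℝ} (h : 1 ≤ r) : e r = 1 := by
  rw [e, Set.projIcc_of_right_le _ h]; rfl
@[simp] lemma e_zero : e 0 = 0 := e_nonpos le_rfl
@[simp] lemma e_one : e 1 = 1 := e_ge_one le_rfl

lemma continuous_snoc (m : ℕ) :
    Continuous (fun p : (Fin m → I) × I => (Fin.snoc p.1 p.2 : Fin (m+1) → I)) := by
  refine continuous_pi fun j => ?_
  refine Fin.lastCases ?_ (fun i => ?_) j
  · simpa using continuous_snd
  · simp only [Fin.snoc_castSucc]
    exact (continuous_apply i).comp continuous_fst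

lemma continuous_coord (m : ℕ) (j : Fin m) :
    Continuous (fun t : Fin m → I => (t j : ℝ)) :=
  Continuous.subtype_val (continuous_apply j)

/-- concatenation of homotopies in the second variable -/
def concat {α X : Type*} [TopologicalSpace α] [TopologicalSpace X]
    (F G : C(α × I, X)) (hFG : ∀ t, F (t, 1) = G (t, 0)) : C(α × I, X) where
  toFun p := if ((p.2 : ℝ)) ≤ 1/2 then F (p.1, e (2 * p.2)) else G (p.1, e (2 * p.2 - 1))
  continuous_toFun := by
    refine Continuous.if_le ?_ ?_ (continuous_subtype_val.comp continuous_snd) continuous_const ?_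
    · exact F.continuous.comp (continuous_fst.prodMk <| e_cont.comp <| by fun_prop)
    · exact G.continuous.comp (continuous_fst.prodMk <| e_cont.comp <| by fun_prop)
    · intro p hp
      have h2 : (2 : ℝ) * p.2 = 1 := by rw [hp]; norm_num
      rw [h2]; simpa using hFG p.1

lemma concat_zero {α X : Type*} [TopologicalSpace α] [TopologicalSpace X]
    (F G : C(α × I, X)) (h : ∀ t, F (t, 1) = G (t, 0)) (t : α) :
    concat F G h (t, 0) = F (t, 0) := by
  simp [concat]
lemma concat_one {α X : Type*} [TopologicalSpace α] [TopologicalSpace X]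
    (F G : C(α × I, X)) (h : ∀ t, F (t, 1) = G (t, 0)) (t : α) :
    concat F G h (t, 1) = G (t, 1) := by
  have : ¬ ((1:ℝ) ≤ 1/2) := by norm_num
  simp [concat, this]
  norm_num
lemma concat_prop {α X : Type*} [TopologicalSpace α] [TopologicalSpace X]
    (F G : C(α × I, X)) (h : ∀ t, F (t, 1) = G (t, 0)) (t : α)
    (P : X → Prop) (hF : ∀ s, P (F (t, s))) (hG : ∀ s, P (G (t, s))) :
    ∀ s, P (concat F G h (t, s)) := by
  intro s
  rw [concat]
  simp only [ContinuousMap.coe_mk]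
  split
  · exact hF _
  · exact hG _


section Maps

variable {X : Type} [TopologicalSpace X] {A B : Set X} {x : X}

/-- Equivalence of `RelHomotopic`. -/
theorem relHomotopic_equiv (n : ℕ) (X : Type) [TopologicalSpace X] (A : Set X) (x : X) :
    Equivalence (@RelHomotopic n X _ A x) := by
  constructor
  · intro f
    refine ⟨f.1.comp ⟨Prod.fst, continuous_fst⟩, fun t => rfl, fun t => rfl, ?_, ?_, ?_⟩
    · intro t s ht; exact f.2.1 t ht
    · intro t s ht; exact f.2.2.1 t ht
    · intro t s ht; exact f.2.2.2 t ht
  · rintro f g ⟨H, h0, h1, hA, h1', hJ⟩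
    refine ⟨H.comp ⟨fun p => (p.1, unitInterval.symm p.2), by fun_prop⟩, ?_, ?_, ?_, ?_, ?_⟩
    · intro t; simpa using h1 t
    · intro t; simpa using h0 t
    · intro t s ht; exact hA t _ ht
    · intro t s ht; exact h1' t _ ht
    · intro t s ht; exact hJ t _ ht
  · rintro f g h ⟨H1, h10, h11, h1A, h1x, h1J⟩ ⟨H2, h20, h21, h2A, h2x, h2J⟩
    have hm : ∀ t, H1 (t, 1) = H2 (t, 0) := fun t => by rw [h11 t, h20 t]
    refine ⟨concat H1 H2 hm, ?_, ?_, ?_, ?_, ?_⟩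
    · intro t; rw [concat_zero]; exact h10 t
    · intro t; rw [concat_one]; exact h21 t
    · intro t s ht
      exact concat_prop H1 H2 hm t (· ∈ A) (fun s => h1A t s ht) (fun s => h2A t s ht) s
    · intro t s ht
      exact concat_prop H1 H2 hm t (· = x) (fun s => h1x t s ht) (fun s => h2x t s ht) s
    · intro t s ht
      exact concat_prop H1 H2 hm t (· = x) (fun s => h1J t s ht) (fun s => h2J t s ht) s

theorem quot_mk_eq_iff {n : ℕ} {X : Type} [TopologicalSpace X] {A : Set X} {x : X}
    (f g : RelGenLoop n X A x) :
    Quot.mk (@RelHomotopic n X _ A x) f = Quot.mk _ g ↔ RelHomotopic f g := by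
  rw [Quot.eq]
  exact (relHomotopic_equiv n X A x).eqvGen_iff

variable (hBA : B ⊆ A) (hxB : x ∈ B)

/-- inclusion `(A, B) → (X, B)` on relative loops -/
def iAB (n : ℕ) (f : RelGenLoop n ↥A (Subtype.val ⁻¹' B) ⟨x, hBA hxB⟩) :
    RelGenLoop n X B x := by
  refine ⟨(⟨Subtype.val, continuous_subtype_val⟩ : C(↥A, X)).comp f.1, ?_, ?_, ?_⟩
  · intro t ht; exact f.2.1 t ht
  · intro t ht; simp [f.2.2.1 t ht]
  · intro t ht; simp [f.2.2.2 t ht]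

/-- inclusion `(X, B) → (X, A)` on relative loops -/
def iBA (n : ℕ) (f : RelGenLoop n X B x) : RelGenLoop n X A x :=
  ⟨f.1, fun t ht => hBA (f.2.1 t ht), f.2.2⟩

lemma snoc_zero_last {n : ℕ} (t : Fin (n+1) → I) :
    (Fin.snoc t 0 : Fin (n+2) → I) (Fin.last (n+1)) = 0 := Fin.snoc_last _ _

/-- restriction to the face `t_last = 0`, as a map into `A` -/
def fMap (n : ℕ) (f : RelGenLoop (n+1) X A x) :
    RelGenLoop n ↥A (Subtype.val ⁻¹' B) ⟨x, hBA hxB⟩ := by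
  refine ⟨⟨fun t => ⟨f.1 (Fin.snoc t 0), f.2.1 _ (snoc_zero_last t)⟩, ?_⟩, ?_, ?_, ?_⟩
  · exact Continuous.subtype_mk
      (f.1.continuous.comp ((continuous_snoc (n+1)).comp (continuous_id.prodMk continuous_const))) _
  · intro t ht
    have : f.1 (Fin.snoc t 0) = x := by
      refine f.2.2.2 _ ⟨Fin.last n, Or.inl ?_⟩
      rw [Fin.snoc_castSucc]; exact ht
    show f.1 (Fin.snoc t 0) ∈ B
    rw [this]; exact hxB
  · intro t ht
    refine Subtype.ext ?_
    refine f.2.2.2 _ ⟨Fin.last n, Or.inr ?_⟩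
    rw [Fin.snoc_castSucc]; exact ht
  · rintro t ⟨i, hi⟩
    refine Subtype.ext ?_
    refine f.2.2.2 _ ⟨i.castSucc, ?_⟩
    rw [Fin.snoc_castSucc]; exact hi

end Maps

section QuotMaps

variable {X : Type} [TopologicalSpace X] {A B : Set X} (hBA : B ⊆ A) {x : X} (hxB : x ∈ B)

lemma iAB_resp (n : ℕ) (f g : RelGenLoop n ↥A (Subtype.val ⁻¹' B) ⟨x, hBA hxB⟩)
    (h : RelHomotopic f g) : RelHomotopic (iAB hBA hxB n f) (iAB hBA hxB n g) := by
  obtain ⟨H, h0, h1, hB, hx, hJ⟩ := h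
  refine ⟨(⟨Subtype.val, continuous_subtype_val⟩ : C(↥A, X)).comp H, ?_, ?_, ?_, ?_, ?_⟩
  · intro t; simp [iAB, h0 t]
  · intro t; simp [iAB, h1 t]
  · intro t s ht; exact hB t s ht
  · intro t s ht; simp [hx t s ht]
  · intro t s ht; simp [hJ t s ht]

lemma iBA_resp (n : ℕ) (f g : RelGenLoop n X B x)
    (h : RelHomotopic f g) : RelHomotopic (iBA hBA n f) (iBA hBA n g) := by
  obtain ⟨H, h0, h1, hB, hx, hJ⟩ := h
  exact ⟨H, h0, h1, fun t s ht => hBA (hB t s ht), hx, hJ⟩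

lemma fMap_resp (n : ℕ) (f g : RelGenLoop (n+1) X A x)
    (h : RelHomotopic f g) : RelHomotopic (fMap hBA hxB n f) (fMap hBA hxB n g) := by
  obtain ⟨H, h0, h1, hA, hx, hJ⟩ := h
  have hmem : ∀ (t : Fin (n+1) → I) (s : I), H (Fin.snoc t 0, s) ∈ A :=
    fun t s => hA _ s (snoc_zero_last t)
  refine ⟨⟨fun p => ⟨H (Fin.snoc p.1 0, p.2), hmem p.1 p.2⟩, ?_⟩, ?_, ?_, ?_, ?_, ?_⟩
  · refine Continuous.subtype_mk (H.continuous.comp ?_) _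
    exact ((continuous_snoc (n+1)).comp (continuous_fst.prodMk continuous_const)).prodMk
      continuous_snd
  · intro t; exact Subtype.ext (h0 _)
  · intro t; exact Subtype.ext (h1 _)
  · intro t s ht
    show H (Fin.snoc t 0, s) ∈ B
    refine (hJ _ s ⟨Fin.last n, Or.inl ?_⟩) ▸ hxB
    rw [Fin.snoc_castSucc]; exact ht
  · intro t s ht
    refine Subtype.ext (hJ _ s ⟨Fin.last n, Or.inr ?_⟩)
    rw [Fin.snoc_castSucc]; exact ht
  · rintro t s ⟨i, hi⟩
    refine Subtype.ext (hJ _ s ⟨i.castSucc, ?_⟩)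
    rw [Fin.snoc_castSucc]; exact hi

/-- the induced map `α` on quotients -/
def alphaQ (n : ℕ) : RelHomotopyGroup n ↥A (Subtype.val ⁻¹' B) ⟨x, hBA hxB⟩ →
    RelHomotopyGroup n X B x :=
  Quot.lift (fun f => Quot.mk _ (iAB hBA hxB n f))
    (fun f g h => Quot.sound (iAB_resp hBA hxB n f g h))

def betaQ (n : ℕ) : RelHomotopyGroup n X B x → RelHomotopyGroup n X A x :=
  Quot.lift (fun f => Quot.mk _ (iBA hBA n f))
    (fun f g h => Quot.sound (iBA_resp hBA n f g h))

def bdQ (n : ℕ) : RelHomotopyGroup (n+1) X A x →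
    RelHomotopyGroup n ↥A (Subtype.val ⁻¹' B) ⟨x, hBA hxB⟩ :=
  Quot.lift (fun f => Quot.mk _ (fMap hBA hxB n f))
    (fun f g h => Quot.sound (fMap_resp hBA hxB n f g h))

lemma alphaQ_cont (n : ℕ) : Continuous (alphaQ hBA hxB n) := by
  refine continuous_quot_lift _ (continuous_quot_mk.comp ?_)
  refine Continuous.subtype_mk ?_ _
  exact (ContinuousMap.continuous_postcomp _).comp continuous_subtype_val

lemma betaQ_cont (n : ℕ) : Continuous (betaQ hBA (x := x) n) := by
  refine continuous_quot_lift _ (continuous_quot_mk.comp ?_)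
  exact Continuous.subtype_mk continuous_subtype_val _

lemma bdQ_cont (n : ℕ) : Continuous (bdQ hBA hxB n) := by
  refine continuous_quot_lift _ (continuous_quot_mk.comp ?_)
  refine Continuous.subtype_mk ?_ _
  refine ContinuousMap.continuous_of_continuous_uncurry _ ?_
  refine Continuous.subtype_mk ?_ _
  have h1 : Continuous fun p : ↥(RelGenLoop (n+1) X A x) × (Fin (n+1) → I) =>
      ((p.1.1 : C(Fin (n+2) → I, X)), (Fin.snoc p.2 0 : Fin (n+2) → I)) := by
    refine Continuous.prodMk (continuous_subtype_val.comp continuous_fst) ?_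
    exact (continuous_snoc (n+1)).comp (continuous_snd.prodMk continuous_const)
  exact ContinuousEval.continuous_eval.comp h1

end QuotMaps

section Easy

variable {X : Type} [TopologicalSpace X] {A B : Set X} (hBA : B ⊆ A) {x : X} (hxB : x ∈ B)

/-- constant relative loop -/
def cst (n : ℕ) (X : Type) [TopologicalSpace X] (A : Set X) (x : X) (hx : x ∈ A) :
    RelGenLoop n X A x :=
  ⟨⟨fun _ => x, continuous_const⟩, fun _ _ => hx, fun _ _ => rfl, fun _ _ => rfl⟩

lemma continuous_init (m : ℕ) :
    Continuous (fun t : Fin (m+1) → I => (Fin.init t : Fin m → I)) :=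
  continuous_pi fun i => continuous_apply i.castSucc

/-- restriction of an ambient map to the bottom face -/
def faceC (n : ℕ) (F : C((Fin (n+2) → I), X)) : C((Fin (n+1) → I), X) :=
  F.comp ⟨fun u => (Fin.snoc u 0 : Fin (n+2) → I),
    by exact (continuous_snoc (n+1)).comp (continuous_id.prodMk continuous_const)⟩

/-- the "push the last coordinate to 1" homotopy -/
def pushH (n : ℕ) (F : C((Fin (n+1) → I), X)) : C((Fin (n+1) → I) × I, X) where
  toFun p := F (Fin.snoc (Fin.init p.1)
    (e ((1 - (p.2 : ℝ)) * (p.1 (Fin.last n) : ℝ) + (p.2 : ℝ))))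
  continuous_toFun := by
    have h : Continuous fun p : (Fin (n+1) → I) × I =>
        ((Fin.init p.1 : Fin n → I), e ((1 - (p.2:ℝ)) * (p.1 (Fin.last n):ℝ) + (p.2:ℝ))) :=
      Continuous.prodMk ((continuous_init n).comp continuous_fst) (e_cont.comp (by fun_prop))
    exact F.continuous.comp ((continuous_snoc n).comp h)

lemma pushH_apply_zero (n : ℕ) (F : C((Fin (n+1) → I), X)) (t : Fin (n+1) → I) :
    pushH n F (t, 0) = F t := by
  show F _ = F t
  congr 1
  have h : ((1:ℝ) - ((0:I):ℝ)) * (t (Fin.last n) : ℝ) + ((0:I):ℝ) = (t (Fin.last n) : ℝ) := by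
    norm_num
  rw [h, e_coe]
  exact Fin.snoc_init_self t

lemma pushH_arg_one (n : ℕ) (F : C((Fin (n+1) → I), X)) (t : Fin (n+1) → I) {s : I}
    (h : (1 - (s : ℝ)) * (t (Fin.last n) : ℝ) + (s : ℝ) = 1) :
    pushH n F (t, s) = F (Fin.snoc (Fin.init t) 1) := by
  show F _ = F _
  congr 1
  rw [h, e_one]

lemma pushH_last_one (n : ℕ) (F : C((Fin (n+1) → I), X)) (t : Fin (n+1) → I) (s : I)
    (ht : t (Fin.last n) = 1) : pushH n F (t, s) = F (Fin.snoc (Fin.init t) 1) := by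
  refine pushH_arg_one n F t ?_
  rw [ht]
  show (1 - (s : ℝ)) * 1 + (s : ℝ) = 1
  ring

lemma pushH_one (n : ℕ) (F : C((Fin (n+1) → I), X)) (t : Fin (n+1) → I) :
    pushH n F (t, 1) = F (Fin.snoc (Fin.init t) 1) := by
  refine pushH_arg_one n F t ?_
  show (1 - (1:ℝ)) * _ + (1:ℝ) = 1
  ring

lemma pushH_castSucc (n : ℕ) (t : Fin (n+1) → I) (c : I) (i : Fin n) :
    (Fin.snoc (Fin.init t) c : Fin (n+1) → I) i.castSucc = t i.castSucc := by
  rw [Fin.snoc_castSucc]; rfl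

/-- Easy direction at `π(X,B)`: `β ∘ α` is nullhomotopic. -/
lemma easy2 (n : ℕ) (f : RelGenLoop n ↥A (Subtype.val ⁻¹' B) ⟨x, hBA hxB⟩) :
    RelHomotopic (iBA hBA n (iAB hBA hxB n f)) (cst n X A x (hBA hxB)) := by
  refine ⟨pushH n (iBA hBA n (iAB hBA hxB n f)).1, fun t => pushH_apply_zero _ _ t, ?_, ?_, ?_, ?_⟩
  · intro t
    rw [pushH_one]
    show ((f.1 _ : ↥A) : X) = x
    rw [f.2.2.1 _ (Fin.snoc_last _ _)]
  · intro t s _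
    exact ((f.1 _).2 : _ ∈ A)
  · intro t s ht
    rw [pushH_last_one n _ t s ht]
    show ((f.1 _ : ↥A) : X) = x
    rw [f.2.2.1 _ (Fin.snoc_last _ _)]
  · rintro t s ⟨i, hi⟩
    show ((f.1 _ : ↥A) : X) = x
    rw [f.2.2.2 _ ⟨i, by rwa [pushH_castSucc]⟩]

/-- constant relative loop in the pair `(A,B)` -/
def cstAB (n : ℕ) : RelGenLoop n ↥A (Subtype.val ⁻¹' B) ⟨x, hBA hxB⟩ :=
  cst n ↥A (Subtype.val ⁻¹' B) ⟨x, hBA hxB⟩ hxB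

/-- Easy direction at `π(A,B)`: `α ∘ ∂` is nullhomotopic. -/
lemma easy1 (n : ℕ) (V : RelGenLoop (n+1) X A x) :
    RelHomotopic (iAB hBA hxB n (fMap hBA hxB n V)) (cst n X B x hxB) := by
  refine ⟨(⟨fun p => V.1 (Fin.snoc p.1 p.2),
      by exact V.1.continuous.comp (continuous_snoc (n+1))⟩ : C((Fin (n+1) → I) × I, X)),
    ?_, ?_, ?_, ?_, ?_⟩
  · intro t; rfl
  · intro t; exact V.2.2.1 _ (Fin.snoc_last _ _)
  · intro t s ht
    show V.1 (Fin.snoc t s) ∈ B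
    have : V.1 (Fin.snoc t s) = x := by
      refine V.2.2.2 _ ⟨Fin.last n, Or.inl ?_⟩
      rw [Fin.snoc_castSucc]; exact ht
    rw [this]; exact hxB
  · intro t s ht
    refine V.2.2.2 _ ⟨Fin.last n, Or.inr ?_⟩
    rw [Fin.snoc_castSucc]; exact ht
  · rintro t s ⟨i, hi⟩
    refine V.2.2.2 _ ⟨i.castSucc, ?_⟩
    rw [Fin.snoc_castSucc]; exact hi

/-- Easy direction at `π(X,A)`: `∂ ∘ β` is nullhomotopic. -/
lemma easy3 (n : ℕ) (F : RelGenLoop (n+1) X B x) :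
    RelHomotopic (fMap hBA hxB n (iBA hBA (n := n+1) F)) (cstAB hBA hxB n) := by
  have hmem : ∀ (u : Fin (n+1) → I), faceC n F.1 u ∈ A :=
    fun u => hBA (F.2.1 _ (snoc_zero_last u))
  have hmem' : ∀ p : (Fin (n+1) → I) × I, pushH n (faceC n F.1) p ∈ A := fun p => hmem _
  have hBval : ∀ p : (Fin (n+1) → I) × I, pushH n (faceC n F.1) p ∈ B :=
    fun p => F.2.1 _ (snoc_zero_last _)
  refine ⟨(⟨fun p => ⟨pushH n (faceC n F.1) p, hmem' p⟩, by
      exact Continuous.subtype_mk (pushH n (faceC n F.1)).continuous _⟩ :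
        C((Fin (n+1) → I) × I, ↥A)), ?_, ?_, ?_, ?_, ?_⟩
  · intro t
    exact Subtype.ext (pushH_apply_zero n _ t)
  · intro t
    refine Subtype.ext ?_
    show pushH n (faceC n F.1) (t, 1) = x
    rw [pushH_one]
    show F.1 (Fin.snoc _ 0) = x
    refine F.2.2.2 _ ⟨Fin.last n, Or.inr ?_⟩
    rw [Fin.snoc_castSucc, Fin.snoc_last]
  · intro t s _
    exact hBval (t, s)
  · intro t s ht
    refine Subtype.ext ?_
    show pushH n (faceC n F.1) (t, s) = x
    rw [pushH_last_one n _ t s ht]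
    show F.1 (Fin.snoc _ 0) = x
    refine F.2.2.2 _ ⟨Fin.last n, Or.inr ?_⟩
    rw [Fin.snoc_castSucc, Fin.snoc_last]
  · rintro t s ⟨i, hi⟩
    refine Subtype.ext ?_
    show F.1 (Fin.snoc _ 0) = x
    refine F.2.2.2 _ ⟨i.castSucc, ?_⟩
    rw [Fin.snoc_castSucc, pushH_castSucc]
    exact hi

end Easy

section Hard

variable {X : Type} [TopologicalSpace X] {A B : Set X} (hBA : B ⊆ A) {x : X} (hxB : x ∈ B)

lemma coe_eq_zero {u : I} (h : u = 0) : (u:ℝ) = 0 := by rw [h]; rfl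
lemma coe_eq_one {u : I} (h : u = 1) : (u:ℝ) = 1 := by rw [h]; rfl

lemma pair_eq {α β : Type*} {a a' : α} {b b' : β} (h1 : a = a') (h2 : b = b') :
    (a, b) = (a', b') := by rw [h1, h2]

lemma snoc_eq {m : ℕ} {w w' : Fin m → I} {c c' : I} (hw : w = w') (hc : c = c') :
    (Fin.snoc w c : Fin (m+1) → I) = Fin.snoc w' c' := by rw [hw, hc]

lemma e_eq {r r' : ℝ} (h : r = r') : e r = e r' := by rw [h]

/-- continuity of reparametrized maps -/
lemma contK {α : Type*} [TopologicalSpace α] {m : ℕ} {Y : Type*} [TopologicalSpace Y]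
    (K : C((Fin (m+1) → I) × I, Y)) {g : α → (Fin m → I)} (hg : Continuous g)
    {f1 f2 : α → ℝ} (h1 : Continuous f1) (h2 : Continuous f2) :
    Continuous fun t => K ((Fin.snoc (g t) (e (f1 t)) : Fin (m+1) → I), e (f2 t)) :=
  K.continuous.comp (((continuous_snoc m).comp (hg.prodMk (e_cont.comp h1))).prodMk
    (e_cont.comp h2))

lemma contG {α : Type*} [TopologicalSpace α] {m : ℕ} {Y : Type*} [TopologicalSpace Y]
    (G : C((Fin (m+1) → I) × ℝ, Y)) {g : α → (Fin m → I)} (hg : Continuous g)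
    {f1 f2 : α → ℝ} (h1 : Continuous f1) (h2 : Continuous f2) :
    Continuous fun t => G ((Fin.snoc (g t) (e (f1 t)) : Fin (m+1) → I), f2 t) :=
  G.continuous.comp (((continuous_snoc m).comp (hg.prodMk (e_cont.comp h1))).prodMk h2)

/-- Hard direction at `π(A,B)`. -/
lemma hard1 (n : ℕ) (f : RelGenLoop n ↥A (Subtype.val ⁻¹' B) ⟨x, hBA hxB⟩)
    (K : C((Fin (n+1) → I) × I, X))
    (hK0 : ∀ t, K (t, 0) = ((f.1 t : ↥A) : X))
    (hK1 : ∀ t, K (t, 1) = x)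
    (hKB : ∀ t s, t (Fin.last n) = 0 → K (t, s) ∈ B)
    (hKx : ∀ t s, t (Fin.last n) = 1 → K (t, s) = x)
    (hKJ : ∀ t s, (∃ i : Fin n, t i.castSucc = 0 ∨ t i.castSucc = 1) → K (t, s) = x) :
    ∃ V : RelGenLoop (n+1) X A x, RelHomotopic (fMap hBA hxB n V) f := by
  classical
  set Vmap : C((Fin (n+2) → I), X) :=
    ⟨fun t => K ((Fin.snoc (Fin.init (Fin.init t))
          (e ((1 - (t (Fin.last (n+1)) : ℝ)) * max (2*(t (Fin.last n).castSucc : ℝ) - 1) 0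
            + (t (Fin.last (n+1)) : ℝ) * (t (Fin.last n).castSucc : ℝ))) : Fin (n+1) → I),
        e ((1 - (t (Fin.last (n+1)) : ℝ)) * max (1 - 2*(t (Fin.last n).castSucc : ℝ)) 0
            + (t (Fin.last (n+1)) : ℝ))),
      contK K ((continuous_init n).comp (continuous_init (n+1))) (by fun_prop) (by fun_prop)⟩
    with hVmapdef
  have hVapp : ∀ t : Fin (n+2) → I, Vmap t =
      K ((Fin.snoc (Fin.init (Fin.init t))
          (e ((1 - (t (Fin.last (n+1)) : ℝ)) * max (2*(t (Fin.last n).castSucc : ℝ) - 1) 0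
            + (t (Fin.last (n+1)) : ℝ) * (t (Fin.last n).castSucc : ℝ))) : Fin (n+1) → I),
        e ((1 - (t (Fin.last (n+1)) : ℝ)) * max (1 - 2*(t (Fin.last n).castSucc : ℝ)) 0
            + (t (Fin.last (n+1)) : ℝ))) := fun t => rfl
  have hVmem : Vmap ∈ RelGenLoop (n+1) X A x := by
    refine ⟨?_, ?_, ?_⟩
    · intro t ht
      rw [hVapp t, coe_eq_zero ht]
      set a : ℝ := (t (Fin.last n).castSucc : ℝ) with ha
      rcases le_or_gt a (1/2) with hc | hc
      · rw [e_eq (show (1-(0:ℝ)) * max (2*a-1) 0 + 0 * a = 0 by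
          rw [max_eq_right (by linarith)]; ring), e_zero]
        exact hBA (hKB _ _ (Fin.snoc_last _ _))
      · rw [e_eq (show (1-(0:ℝ)) * max (1-2*a) 0 + 0 = 0 by
          rw [max_eq_right (by linarith)]; ring), e_zero, hK0]
        exact (f.1 _).2
    · intro t ht
      rw [hVapp t, coe_eq_one ht]
      set a : ℝ := (t (Fin.last n).castSucc : ℝ) with ha
      rw [e_eq (show (1-(1:ℝ)) * max (1-2*a) 0 + 1 = 1 by ring), e_one]
      exact hK1 _
    · rintro t ⟨i, hi⟩
      rw [hVapp t]
      rcases Fin.eq_castSucc_or_eq_last i with ⟨j, rfl⟩ | rfl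
      · refine hKJ _ _ ⟨j, ?_⟩
        rw [Fin.snoc_castSucc]
        exact hi
      · rcases hi with h0 | h1
        · rw [e_eq (r := (1 - (t (Fin.last (n+1)) : ℝ)) * max (1 - 2*(t (Fin.last n).castSucc : ℝ)) 0
              + (t (Fin.last (n+1)) : ℝ))
            (show _ = 1 by rw [coe_eq_zero h0]; rw [max_eq_left (by norm_num)]; ring), e_one]
          exact hK1 _
        · rw [e_eq (r := (1 - (t (Fin.last (n+1)) : ℝ)) * max (2*(t (Fin.last n).castSucc : ℝ) - 1) 0
              + (t (Fin.last (n+1)) : ℝ) * (t (Fin.last n).castSucc : ℝ))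
            (show _ = 1 by rw [coe_eq_one h1]; rw [max_eq_left (by norm_num)]; ring), e_one]
          exact hKx _ _ (Fin.snoc_last _ _)
  refine ⟨⟨Vmap, hVmem⟩, ?_⟩
  have hq : ∀ a r : ℝ, 0 ≤ a → 0 ≤ r → 2*a ≤ 1 - r → (1-r)*(2*a-1) + r*a ≤ 0 := by
    intro a r h1 h2 h3
    nlinarith [mul_nonneg h2 h1]
  have memL : ∀ (t : Fin (n+1) → I) (r : I),
      K ((Fin.snoc (Fin.init t)
          (e (max ((1 - (r:ℝ))*(2*(t (Fin.last n) : ℝ)-1) + (r:ℝ)*(t (Fin.last n) : ℝ)) 0)) :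
            Fin (n+1) → I),
        e (max (1 - (r:ℝ) - 2*(t (Fin.last n) : ℝ)) 0)) ∈ A := by
    intro t r
    set a : ℝ := (t (Fin.last n) : ℝ) with ha
    rcases le_or_gt (2*a) (1-(r:ℝ)) with hc | hc
    · rw [e_eq (show max ((1-(r:ℝ))*(2*a-1) + (r:ℝ)*a) 0 = 0 from
        max_eq_right (hq a r (t (Fin.last n)).2.1 r.2.1 hc)), e_zero]
      exact hBA (hKB _ _ (Fin.snoc_last _ _))
    · rw [e_eq (show max (1 - (r:ℝ) - 2*a) 0 = 0 from max_eq_right (by linarith)), e_zero, hK0]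
      exact (f.1 _).2
  refine ⟨⟨fun p => ⟨K ((Fin.snoc (Fin.init p.1)
          (e (max ((1 - (p.2:ℝ))*(2*(p.1 (Fin.last n) : ℝ)-1) + (p.2:ℝ)*(p.1 (Fin.last n) : ℝ)) 0)) :
            Fin (n+1) → I),
        e (max (1 - (p.2:ℝ) - 2*(p.1 (Fin.last n) : ℝ)) 0)), memL p.1 p.2⟩,
      Continuous.subtype_mk (contK K ((continuous_init n).comp continuous_fst)
        (by fun_prop) (by fun_prop)) _⟩, ?_, ?_, ?_, ?_, ?_⟩
  · -- r = 0 : this is the bottom face of V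
    intro t
    refine Subtype.ext ?_
    show K _ = Vmap (Fin.snoc t 0)
    rw [hVapp]
    refine congrArg K (pair_eq (snoc_eq ?_ (e_eq ?_)) (e_eq ?_))
    · rw [Fin.init_snoc]
    · rw [Fin.snoc_castSucc, Fin.snoc_last]
      rw [show (((0:I)):ℝ) = 0 from rfl]
      set a : ℝ := (t (Fin.last n) : ℝ)
      rcases le_total (2*a-1) 0 with hc | hc
      · rw [max_eq_right hc, max_eq_right (by linarith)]; ring
      · rw [max_eq_left hc, max_eq_left (by linarith)]
    · rw [Fin.snoc_castSucc, Fin.snoc_last]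
      rw [show (((0:I)):ℝ) = 0 from rfl]
      ring_nf
  · -- r = 1 : this is f
    intro t
    refine Subtype.ext ?_
    show K _ = ((f.1 t : ↥A) : X)
    set a : ℝ := (t (Fin.last n) : ℝ) with ha
    rw [e_eq (show max (1 - ((1:I):ℝ) - 2*a) 0 = 0 from max_eq_right
        (by rw [show ((1:I):ℝ) = 1 from rfl]; nlinarith [(t (Fin.last n)).2.1]))]
    rw [e_eq (show max ((1 - ((1:I):ℝ))*(2*a-1) + ((1:I):ℝ)*a) 0 = a from by
        rw [show ((1:I):ℝ) = 1 from rfl]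
        rw [show (1-(1:ℝ))*(2*a-1) + 1*a = a by ring]
        exact max_eq_left (t (Fin.last n)).2.1)]
    rw [ha, e_coe, e_zero, Fin.snoc_init_self, hK0]
  · -- bottom face of the homotopy lies in B'
    intro t r ht
    show K _ ∈ B
    rw [coe_eq_zero ht]
    rw [e_eq (show max ((1 - (r:ℝ))*(2*0-1) + (r:ℝ)*0) 0 = 0 from
      max_eq_right (by nlinarith [r.2.2])), e_zero]
    exact hKB _ _ (Fin.snoc_last _ _)
  · -- top face of the homotopy is x
    intro t r ht
    refine Subtype.ext ?_
    show K _ = x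
    rw [coe_eq_one ht]
    rw [e_eq (show max ((1 - (r:ℝ))*(2*1-1) + (r:ℝ)*1) 0 = 1 from by
      rw [show (1 - (r:ℝ))*(2*1-1) + (r:ℝ)*1 = 1 by ring]; exact max_eq_left (by norm_num)), e_one]
    exact hKx _ _ (Fin.snoc_last _ _)
  · -- J-faces of the homotopy are x
    rintro t r ⟨j, hj⟩
    refine Subtype.ext ?_
    show K _ = x
    refine hKJ _ _ ⟨j, ?_⟩
    rw [Fin.snoc_castSucc]
    exact hj

/-- Hard direction at `π(X,B)`. -/
lemma hard2 (n : ℕ) (f : RelGenLoop n X B x)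
    (K : C((Fin (n+1) → I) × I, X))
    (hK0 : ∀ t, K (t, 0) = f.1 t)
    (hK1 : ∀ t, K (t, 1) = x)
    (hKA : ∀ t s, t (Fin.last n) = 0 → K (t, s) ∈ A)
    (hKx : ∀ t s, t (Fin.last n) = 1 → K (t, s) = x)
    (hKJ : ∀ t s, (∃ i : Fin n, t i.castSucc = 0 ∨ t i.castSucc = 1) → K (t, s) = x) :
    ∃ g : RelGenLoop n ↥A (Subtype.val ⁻¹' B) ⟨x, hBA hxB⟩,
      RelHomotopic (iAB hBA hxB n g) f := by
  classical
  have memF : ∀ t : Fin (n+1) → I,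
      K ((Fin.snoc (Fin.init t) (e (max (2*(t (Fin.last n) : ℝ) - 1) 0)) : Fin (n+1) → I),
        e (min (2*(t (Fin.last n) : ℝ)) 1)) ∈ A := by
    intro t
    set a : ℝ := (t (Fin.last n) : ℝ) with ha
    rcases le_or_gt a (1/2) with hc | hc
    · rw [e_eq (show max (2*a-1) 0 = 0 from max_eq_right (by linarith)), e_zero]
      exact hKA _ _ (Fin.snoc_last _ _)
    · rw [e_eq (show min (2*a) 1 = 1 from min_eq_right (by linarith)), e_one, hK1]
      exact hBA hxB
  set gmap : C((Fin (n+1) → I), ↥A) :=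
    ⟨fun t => ⟨K ((Fin.snoc (Fin.init t) (e (max (2*(t (Fin.last n) : ℝ) - 1) 0)) :
          Fin (n+1) → I), e (min (2*(t (Fin.last n) : ℝ)) 1)), memF t⟩,
      Continuous.subtype_mk (contK K (continuous_init n) (by fun_prop) (by fun_prop)) _⟩
    with hgmapdef
  have hgmem : gmap ∈ RelGenLoop n ↥A (Subtype.val ⁻¹' B) ⟨x, hBA hxB⟩ := by
    refine ⟨?_, ?_, ?_⟩
    · intro t ht
      show K _ ∈ B
      rw [coe_eq_zero ht]
      rw [e_eq (show max (2*(0:ℝ)-1) 0 = 0 from max_eq_right (by norm_num)), e_zero,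
        e_eq (show min (2*(0:ℝ)) 1 = 0 from by rw [min_eq_left (by norm_num)]; ring), e_zero, hK0]
      exact f.2.1 _ (Fin.snoc_last _ _)
    · intro t ht
      refine Subtype.ext ?_
      show K _ = x
      rw [coe_eq_one ht]
      rw [e_eq (show max (2*(1:ℝ)-1) 0 = 1 from by rw [max_eq_left (by norm_num)]; norm_num), e_one]
      exact hKx _ _ (Fin.snoc_last _ _)
    · rintro t ⟨j, hj⟩
      refine Subtype.ext ?_
      show K _ = x
      refine hKJ _ _ ⟨j, ?_⟩
      rw [Fin.snoc_castSucc]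
      exact hj
  refine ⟨⟨gmap, hgmem⟩, (relHomotopic_equiv n X B x).symm ?_⟩
  -- homotopy from f to the compressed loop
  refine ⟨⟨fun p => K ((Fin.snoc (Fin.init p.1)
        (e ((1 - (p.2:ℝ)) * (p.1 (Fin.last n) : ℝ)
          + (p.2:ℝ) * max (2*(p.1 (Fin.last n) : ℝ) - 1) 0)) : Fin (n+1) → I),
      e ((p.2:ℝ) * min (2*(p.1 (Fin.last n) : ℝ)) 1)),
      contK K ((continuous_init n).comp continuous_fst) (by fun_prop) (by fun_prop)⟩,
    ?_, ?_, ?_, ?_, ?_⟩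
  · -- r = 0 : f
    intro t
    show K _ = f.1 t
    rw [show ((0:I):ℝ) = 0 from rfl]
    rw [e_eq (show (1 - (0:ℝ)) * (t (Fin.last n) : ℝ) + 0 * max (2*(t (Fin.last n) : ℝ) - 1) 0
        = (t (Fin.last n) : ℝ) from by ring), e_coe,
      e_eq (show (0:ℝ) * min (2*(t (Fin.last n) : ℝ)) 1 = 0 from by ring), e_zero,
      Fin.snoc_init_self, hK0]
  · -- r = 1 : the compressed loop
    intro t
    show K _ = ((gmap t : ↥A) : X)
    rw [hgmapdef]
    refine congrArg K (pair_eq (snoc_eq rfl (e_eq ?_)) (e_eq ?_))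
    · rw [show ((1:I):ℝ) = 1 from rfl]; ring
    · rw [show ((1:I):ℝ) = 1 from rfl]; ring
  · -- bottom face stays in B
    intro t r ht
    show K _ ∈ B
    rw [coe_eq_zero ht]
    rw [e_eq (show (1 - (r:ℝ)) * 0 + (r:ℝ) * max (2*(0:ℝ)-1) 0 = 0 from by
        rw [max_eq_right (by norm_num)]; ring), e_zero,
      e_eq (show (r:ℝ) * min (2*(0:ℝ)) 1 = 0 from by rw [min_eq_left (by norm_num)]; ring),
      e_zero, hK0]
    exact f.2.1 _ (Fin.snoc_last _ _)
  · -- top face is x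
    intro t r ht
    show K _ = x
    rw [coe_eq_one ht]
    rw [e_eq (show (1 - (r:ℝ)) * 1 + (r:ℝ) * max (2*(1:ℝ)-1) 0 = 1 from by
        rw [max_eq_left (by norm_num)]; ring), e_one]
    exact hKx _ _ (Fin.snoc_last _ _)
  · -- J-faces are x
    rintro t r ⟨j, hj⟩
    show K _ = x
    refine hKJ _ _ ⟨j, ?_⟩
    rw [Fin.snoc_castSucc]
    exact hj

/-- Hard direction at `π(X,A)`. -/
lemma hard3 (hxB' : x ∈ B) (n : ℕ) (V : RelGenLoop (n+1) X A x)
    (K : C((Fin (n+1) → I) × I, ↥A))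
    (hK0 : ∀ t, ((K (t, 0) : ↥A) : X) = V.1 (Fin.snoc t 0))
    (hK1 : ∀ t, ((K (t, 1) : ↥A) : X) = x)
    (hKB : ∀ t s, t (Fin.last n) = 0 → ((K (t, s) : ↥A) : X) ∈ B)
    (hKx : ∀ t s, t (Fin.last n) = 1 → ((K (t, s) : ↥A) : X) = x)
    (hKJ : ∀ t s, (∃ i : Fin n, t i.castSucc = 0 ∨ t i.castSucc = 1) →
      ((K (t, s) : ↥A) : X) = x) :
    ∃ F : RelGenLoop (n+1) X B x, RelHomotopic (iBA hBA (n := n+1) F) V := by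
  classical
  set G : C((Fin (n+1) → I) × ℝ, X) :=
    ⟨fun p => if p.2 ≤ 0 then ((K (p.1, e (-p.2)) : ↥A) : X) else V.1 (Fin.snoc p.1 (e p.2)), by
      refine Continuous.if_le ?_ ?_ continuous_snd continuous_const ?_
      · exact continuous_subtype_val.comp (K.continuous.comp
          (continuous_fst.prodMk (e_cont.comp continuous_snd.neg)))
      · exact V.1.continuous.comp ((continuous_snoc (n+1)).comp
          (continuous_fst.prodMk (e_cont.comp continuous_snd)))
      · intro p hp
        rw [hp, neg_zero, e_zero, hK0]⟩ with hGdef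
  have hGif : ∀ (u : Fin (n+1) → I) (c : ℝ), G (u, c) =
      if c ≤ 0 then ((K (u, e (-c)) : ↥A) : X) else V.1 (Fin.snoc u (e c)) := fun _ _ => rfl
  have G_neg : ∀ (u : Fin (n+1) → I) (c : ℝ), c ≤ 0 →
      G (u, c) = ((K (u, e (-c)) : ↥A) : X) := fun u c h => by rw [hGif, if_pos h]
  have G_pos : ∀ (u : Fin (n+1) → I) (c : I), G (u, (c:ℝ)) = V.1 (Fin.snoc u c) := by
    intro u c
    rw [hGif]
    split_ifs with h
    · have hc0 : c = 0 := Subtype.ext (le_antisymm h c.2.1)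
      rw [hc0, show ((0:I):ℝ) = 0 from rfl, neg_zero, e_zero, hK0]
    · rw [e_coe]
  set Fmap : C((Fin (n+2) → I), X) :=
    ⟨fun t => G ((Fin.snoc (Fin.init (Fin.init t))
          (e ((1 - (t (Fin.last (n+1)) : ℝ)) * max (2*(t (Fin.last n).castSucc : ℝ) - 1) 0
            + (t (Fin.last (n+1)) : ℝ) * (t (Fin.last n).castSucc : ℝ))) : Fin (n+1) → I),
        (1 - (t (Fin.last (n+1)) : ℝ)) * (-(min (2*(t (Fin.last n).castSucc : ℝ)) 1))
          + (t (Fin.last (n+1)) : ℝ)), by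
      exact contG G ((continuous_init n).comp (continuous_init (n+1))) (by fun_prop) (by fun_prop)⟩
    with hFdef
  have hFapp : ∀ t : Fin (n+2) → I, Fmap t =
      G ((Fin.snoc (Fin.init (Fin.init t))
          (e ((1 - (t (Fin.last (n+1)) : ℝ)) * max (2*(t (Fin.last n).castSucc : ℝ) - 1) 0
            + (t (Fin.last (n+1)) : ℝ) * (t (Fin.last n).castSucc : ℝ))) : Fin (n+1) → I),
        (1 - (t (Fin.last (n+1)) : ℝ)) * (-(min (2*(t (Fin.last n).castSucc : ℝ)) 1))
          + (t (Fin.last (n+1)) : ℝ)) := fun _ => rfl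
  have hFmem : Fmap ∈ RelGenLoop (n+1) X B x := by
    refine ⟨?_, ?_, ?_⟩
    · -- bottom face lies in B
      intro t ht
      rw [hFapp, coe_eq_zero ht]
      set a : ℝ := (t (Fin.last n).castSucc : ℝ) with ha
      have hmin : (0:ℝ) ≤ min (2*a) 1 :=
        le_min (mul_nonneg (by norm_num) (t (Fin.last n).castSucc).2.1) zero_le_one
      rw [show (1-(0:ℝ)) * (-(min (2*a) 1)) + 0 = -(min (2*a) 1) from by ring,
        G_neg _ _ (neg_nonpos.mpr hmin), neg_neg]
      rcases le_or_gt a (1/2) with hc | hc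
      · rw [e_eq (show (1-(0:ℝ)) * max (2*a-1) 0 + 0 * a = 0 from by
          rw [max_eq_right (by linarith)]; ring), e_zero]
        exact hKB _ _ (Fin.snoc_last _ _)
      · rw [e_eq (show min (2*a) 1 = 1 from min_eq_right (by linarith)), e_one, hK1]
        exact hxB'
    · -- top face is x
      intro t ht
      rw [hFapp, coe_eq_one ht]
      rw [show (1-(1:ℝ)) * (-(min (2*(t (Fin.last n).castSucc : ℝ)) 1)) + 1 = 1 from by ring,
        hGif, if_neg (by norm_num), e_one]
      exact V.2.2.1 _ (Fin.snoc_last _ _)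
    · -- J-faces are x
      rintro t ⟨i, hi⟩
      rw [hFapp]
      rcases Fin.eq_castSucc_or_eq_last i with ⟨j, rfl⟩ | rfl
      · rw [hGif]
        split_ifs with h
        · refine hKJ _ _ ⟨j, ?_⟩
          rw [Fin.snoc_castSucc]
          exact hi
        · refine V.2.2.2 _ ⟨j.castSucc, ?_⟩
          rw [Fin.snoc_castSucc, Fin.snoc_castSucc]
          exact hi
      · rcases hi with h0 | h1
        · rw [coe_eq_zero h0]
          rw [e_eq (show (1 - (t (Fin.last (n+1)) : ℝ)) * max (2*0-1) 0
              + (t (Fin.last (n+1)) : ℝ) * 0 = 0 from by rw [max_eq_right (by norm_num)]; ring),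
            e_zero,
            show (1 - (t (Fin.last (n+1)) : ℝ)) * (-(min (2*(0:ℝ)) 1))
              + (t (Fin.last (n+1)) : ℝ) = ((t (Fin.last (n+1)) : I) : ℝ) from by
                rw [min_eq_left (by norm_num)]; ring,
            G_pos]
          refine V.2.2.2 _ ⟨Fin.last n, Or.inl ?_⟩
          rw [Fin.snoc_castSucc, Fin.snoc_last]
        · rw [coe_eq_one h1]
          rw [e_eq (show (1 - (t (Fin.last (n+1)) : ℝ)) * max (2*1-1) 0
              + (t (Fin.last (n+1)) : ℝ) * 1 = 1 from by rw [max_eq_left (by norm_num)]; ring),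
            e_one, hGif]
          split_ifs with h
          · exact hKx _ _ (Fin.snoc_last _ _)
          · refine V.2.2.2 _ ⟨Fin.last n, Or.inr ?_⟩
            rw [Fin.snoc_castSucc, Fin.snoc_last]
  refine ⟨⟨Fmap, hFmem⟩, (relHomotopic_equiv (n+1) X A x).symm ?_⟩
  -- the homotopy from V to the compressed map
  refine ⟨⟨fun p => G ((Fin.snoc (Fin.init (Fin.init p.1))
        (e ((1 - (p.2:ℝ)) * (p.1 (Fin.last n).castSucc : ℝ)
          + (p.2:ℝ) * ((1 - (p.1 (Fin.last (n+1)) : ℝ))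
              * max (2*(p.1 (Fin.last n).castSucc : ℝ) - 1) 0
            + (p.1 (Fin.last (n+1)) : ℝ) * (p.1 (Fin.last n).castSucc : ℝ)))) : Fin (n+1) → I),
      (1 - (p.2:ℝ)) * (p.1 (Fin.last (n+1)) : ℝ)
        + (p.2:ℝ) * ((1 - (p.1 (Fin.last (n+1)) : ℝ))
            * (-(min (2*(p.1 (Fin.last n).castSucc : ℝ)) 1))
          + (p.1 (Fin.last (n+1)) : ℝ))), by
      exact contG G (((continuous_init n).comp (continuous_init (n+1))).comp continuous_fst)
        (by fun_prop) (by fun_prop)⟩,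
    ?_, ?_, ?_, ?_, ?_⟩
  · -- r = 0 : V itself
    intro t
    show G _ = V.1 t
    rw [show ((0:I):ℝ) = 0 from rfl]
    rw [e_eq (show (1-(0:ℝ)) * (t (Fin.last n).castSucc : ℝ)
        + 0 * ((1 - (t (Fin.last (n+1)) : ℝ)) * max (2*(t (Fin.last n).castSucc : ℝ) - 1) 0
          + (t (Fin.last (n+1)) : ℝ) * (t (Fin.last n).castSucc : ℝ))
        = ((t (Fin.last n).castSucc : I) : ℝ) from by ring), e_coe]
    rw [show (1-(0:ℝ)) * (t (Fin.last (n+1)) : ℝ)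
        + 0 * ((1 - (t (Fin.last (n+1)) : ℝ)) * (-(min (2*(t (Fin.last n).castSucc : ℝ)) 1))
          + (t (Fin.last (n+1)) : ℝ)) = ((t (Fin.last (n+1)) : I) : ℝ) from by ring]
    rw [G_pos]
    refine congrArg V.1 ?_
    have h1 : (Fin.snoc (Fin.init (Fin.init t)) (t (Fin.last n).castSucc) : Fin (n+1) → I)
        = Fin.init t := Fin.snoc_init_self (Fin.init t)
    rw [h1]
    exact Fin.snoc_init_self t
  · -- r = 1 : the compressed map
    intro t
    show G _ = Fmap t
    rw [hFapp, show ((1:I):ℝ) = 1 from rfl]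
    rw [e_eq (show (1-(1:ℝ)) * (t (Fin.last n).castSucc : ℝ)
        + 1 * ((1 - (t (Fin.last (n+1)) : ℝ)) * max (2*(t (Fin.last n).castSucc : ℝ) - 1) 0
          + (t (Fin.last (n+1)) : ℝ) * (t (Fin.last n).castSucc : ℝ))
        = (1 - (t (Fin.last (n+1)) : ℝ)) * max (2*(t (Fin.last n).castSucc : ℝ) - 1) 0
          + (t (Fin.last (n+1)) : ℝ) * (t (Fin.last n).castSucc : ℝ) from by ring)]
    rw [show (1-(1:ℝ)) * (t (Fin.last (n+1)) : ℝ)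
        + 1 * ((1 - (t (Fin.last (n+1)) : ℝ)) * (-(min (2*(t (Fin.last n).castSucc : ℝ)) 1))
          + (t (Fin.last (n+1)) : ℝ))
        = (1 - (t (Fin.last (n+1)) : ℝ)) * (-(min (2*(t (Fin.last n).castSucc : ℝ)) 1))
          + (t (Fin.last (n+1)) : ℝ) from by ring]
  · -- bottom face stays in A
    intro t r ht
    show G _ ∈ A
    rw [coe_eq_zero ht]
    have hmin : (0:ℝ) ≤ min (2*(t (Fin.last n).castSucc : ℝ)) 1 :=
      le_min (mul_nonneg (by norm_num) (t (Fin.last n).castSucc).2.1) zero_le_one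
    rw [show (1-(r:ℝ)) * 0 + (r:ℝ) * ((1 - (0:ℝ))
        * (-(min (2*(t (Fin.last n).castSucc : ℝ)) 1)) + 0)
        = -((r:ℝ) * min (2*(t (Fin.last n).castSucc : ℝ)) 1) from by ring,
      G_neg _ _ (neg_nonpos.mpr (mul_nonneg r.2.1 hmin))]
    exact (K _).2
  · -- top face is x
    intro t r ht
    show G _ = x
    rw [coe_eq_one ht]
    rw [show (1-(r:ℝ)) * 1 + (r:ℝ) * ((1 - (1:ℝ))
        * (-(min (2*(t (Fin.last n).castSucc : ℝ)) 1)) + 1) = 1 from by ring,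
      hGif, if_neg (by norm_num), e_one]
    exact V.2.2.1 _ (Fin.snoc_last _ _)
  · -- J-faces are x
    rintro t r ⟨i, hi⟩
    show G _ = x
    rcases Fin.eq_castSucc_or_eq_last i with ⟨j, rfl⟩ | rfl
    · rw [hGif]
      split_ifs with h
      · refine hKJ _ _ ⟨j, ?_⟩
        rw [Fin.snoc_castSucc]
        exact hi
      · refine V.2.2.2 _ ⟨j.castSucc, ?_⟩
        rw [Fin.snoc_castSucc, Fin.snoc_castSucc]
        exact hi
    · rcases hi with h0 | h1
      · rw [coe_eq_zero h0]
        rw [e_eq (show (1-(r:ℝ)) * 0 + (r:ℝ) * ((1 - (t (Fin.last (n+1)) : ℝ)) * max (2*0-1) 0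
            + (t (Fin.last (n+1)) : ℝ) * 0) = 0 from by rw [max_eq_right (by norm_num)]; ring),
          e_zero,
          show (1-(r:ℝ)) * (t (Fin.last (n+1)) : ℝ)
            + (r:ℝ) * ((1 - (t (Fin.last (n+1)) : ℝ)) * (-(min (2*(0:ℝ)) 1))
              + (t (Fin.last (n+1)) : ℝ)) = ((t (Fin.last (n+1)) : I) : ℝ) from by
                rw [min_eq_left (by norm_num)]; ring,
          G_pos]
        refine V.2.2.2 _ ⟨Fin.last n, Or.inl ?_⟩
        rw [Fin.snoc_castSucc, Fin.snoc_last]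
      · rw [coe_eq_one h1]
        rw [e_eq (show (1-(r:ℝ)) * 1 + (r:ℝ) * ((1 - (t (Fin.last (n+1)) : ℝ)) * max (2*1-1) 0
            + (t (Fin.last (n+1)) : ℝ) * 1) = 1 from by rw [max_eq_left (by norm_num)]; ring),
          e_one, hGif]
        split_ifs with h
        · exact hKx _ _ (Fin.snoc_last _ _)
        · refine V.2.2.2 _ ⟨Fin.last n, Or.inr ?_⟩
          rw [Fin.snoc_castSucc, Fin.snoc_last]

end Hard

end LESaux

open LESaux in
/-- For pointed spaces `B ⊆ A ⊆ X` (based at `x ∈ B`) there is a long exact sequence of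
the triple in the category of quasitopological groups
`⋯ → π_{n+1}^{qtop}(X,A) → πₙ^{qtop}(A,B) → πₙ^{qtop}(X,B) → πₙ^{qtop}(X,A) →
π_{n-1}^{qtop}(A,B) → ⋯`, with all maps continuous.  (Here `RelHomotopyGroup n`
is `π_{n+1}^{qtop}` and all relative groups carry the quotient topology.)  The maps are
pinned down on representatives: the first two are induced by inclusions, and the
connecting map restricts a relative loop to the face lying in `A`; exactness holds at
every spot, the trivial class being represented by the constant loop. -/
theorem stmt14 (X : Type) [TopologicalSpace X] (A B : Set X) (hBA : B ⊆ A)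
    (x : X) (hxB : x ∈ B) :
    ∃ (α : ∀ n : ℕ, RelHomotopyGroup n A (Subtype.val ⁻¹' B) ⟨x, hBA hxB⟩ →
          RelHomotopyGroup n X B x)
      (β : ∀ n : ℕ, RelHomotopyGroup n X B x → RelHomotopyGroup n X A x)
      (bd : ∀ n : ℕ, RelHomotopyGroup (n + 1) X A x →
          RelHomotopyGroup n A (Subtype.val ⁻¹' B) ⟨x, hBA hxB⟩),
      (∀ n, Continuous (α n)) ∧ (∀ n, Continuous (β n)) ∧ (∀ n, Continuous (bd n)) ∧
      -- `α` is induced by the inclusion `(A,B) ↪ (X,B)`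
      (∀ (n : ℕ) (f : RelGenLoop n A (Subtype.val ⁻¹' B) ⟨x, hBA hxB⟩)
        (g : RelGenLoop n X B x),
        (∀ t, g.1 t = (f.1 t : X)) → α n (Quot.mk _ f) = Quot.mk _ g) ∧
      -- `β` is induced by the inclusion `(X,B) ↪ (X,A)`
      (∀ (n : ℕ) (f : RelGenLoop n X B x) (g : RelGenLoop n X A x),
        (∀ t, g.1 t = f.1 t) → β n (Quot.mk _ f) = Quot.mk _ g) ∧
      -- `bd` restricts a relative loop to its face lying in `A`
      (∀ (n : ℕ) (f : RelGenLoop (n + 1) X A x)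
        (g : RelGenLoop n A (Subtype.val ⁻¹' B) ⟨x, hBA hxB⟩),
        (∀ t : Fin (n + 1) → I, (g.1 t : X) = f.1 (Fin.snoc t 0)) →
        bd n (Quot.mk _ f) = Quot.mk _ g) ∧
      -- exactness at `πₙ^{qtop}(A,B)`
      (∀ (n : ℕ) (u : RelHomotopyGroup n A (Subtype.val ⁻¹' B) ⟨x, hBA hxB⟩),
        (∃ c : RelGenLoop n X B x, (∀ t, c.1 t = x) ∧ α n u = Quot.mk _ c) ↔
          ∃ v, bd n v = u) ∧
      -- exactness at `πₙ^{qtop}(X,B)`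
      (∀ (n : ℕ) (u : RelHomotopyGroup n X B x),
        (∃ c : RelGenLoop n X A x, (∀ t, c.1 t = x) ∧ β n u = Quot.mk _ c) ↔
          ∃ v, α n v = u) ∧
      -- exactness at `π_{n+2}^{qtop}(X,A)`
      ∀ (n : ℕ) (u : RelHomotopyGroup (n + 1) X A x),
        (∃ c : RelGenLoop n A (Subtype.val ⁻¹' B) ⟨x, hBA hxB⟩,
          (∀ t, (c.1 t : X) = x) ∧ bd n u = Quot.mk _ c) ↔
          ∃ v, β (n + 1) v = u := by
  classical
  refine ⟨alphaQ hBA hxB, betaQ hBA, bdQ hBA hxB, alphaQ_cont hBA hxB, betaQ_cont hBA,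
    bdQ_cont hBA hxB, ?_, ?_, ?_, ?_, ?_, ?_⟩
  · -- α is induced by the inclusion
    intro n f g hfg
    have : g = iAB hBA hxB n f :=
      Subtype.ext (ContinuousMap.ext fun t => hfg t)
    rw [this]
    rfl
  · -- β is induced by the inclusion
    intro n f g hfg
    have : g = iBA hBA n f := Subtype.ext (ContinuousMap.ext fun t => hfg t)
    rw [this]
    rfl
  · -- ∂ is the face restriction
    intro n f g hfg
    have : g = fMap hBA hxB n f :=
      Subtype.ext (ContinuousMap.ext fun t => Subtype.ext (hfg t))
    rw [this]
    rfl
  · -- exactness at π(A,B)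
    intro n u
    constructor
    · rintro ⟨c, hc, hα⟩
      obtain ⟨f, rfl⟩ := Quot.exists_rep u
      have hrel : RelHomotopic (iAB hBA hxB n f) c := (quot_mk_eq_iff _ _).1 hα
      obtain ⟨K, h0, h1, hB, hx, hJ⟩ := hrel
      obtain ⟨V, hV⟩ := hard1 hBA hxB n f K (fun t => h0 t)
        (fun t => (h1 t).trans (hc t)) hB hx hJ
      exact ⟨Quot.mk _ V, Quot.sound hV⟩
    · rintro ⟨v, rfl⟩
      obtain ⟨V, rfl⟩ := Quot.exists_rep v
      refine ⟨cst n X B x hxB, fun t => rfl, ?_⟩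
      exact Quot.sound (easy1 hBA hxB n V)
  · -- exactness at π(X,B)
    intro n u
    constructor
    · rintro ⟨c, hc, hβ⟩
      obtain ⟨f, rfl⟩ := Quot.exists_rep u
      have hrel : RelHomotopic (iBA hBA n f) c := (quot_mk_eq_iff _ _).1 hβ
      obtain ⟨K, h0, h1, hA, hx, hJ⟩ := hrel
      obtain ⟨g, hg⟩ := hard2 hBA hxB n f K (fun t => h0 t)
        (fun t => (h1 t).trans (hc t)) hA hx hJ
      exact ⟨Quot.mk _ g, Quot.sound hg⟩
    · rintro ⟨v, rfl⟩
      obtain ⟨f, rfl⟩ := Quot.exists_rep v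
      refine ⟨cst n X A x (hBA hxB), fun t => rfl, ?_⟩
      exact Quot.sound (easy2 hBA hxB n f)
  · -- exactness at π(X,A)
    intro n u
    constructor
    · rintro ⟨c, hc, hbd⟩
      obtain ⟨V, rfl⟩ := Quot.exists_rep u
      have hrel : RelHomotopic (fMap hBA hxB n V) c := (quot_mk_eq_iff _ _).1 hbd
      obtain ⟨K, h0, h1, hB, hx', hJ⟩ := hrel
      obtain ⟨F, hF⟩ := hard3 hBA hxB n V K
        (fun t => congrArg Subtype.val (h0 t))
        (fun t => (congrArg Subtype.val (h1 t)).trans (hc t))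
        (fun t s ht => hB t s ht)
        (fun t s ht => congrArg Subtype.val (hx' t s ht))
        (fun t s ht => congrArg Subtype.val (hJ t s ht))
      exact ⟨Quot.mk _ F, Quot.sound hF⟩
    · rintro ⟨v, rfl⟩
      obtain ⟨F, rfl⟩ := Quot.exists_rep v
      refine ⟨cstAB hBA hxB n, fun t => rfl, ?_⟩
      exact Quot.sound (easy3 hBA hxB n F)
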